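/- If a non-degenerate spherical triangle (geodesic triangle on the unit sphere, with angles not in πℤ, allowing cone-type abstract triangles) has interior angles A, B, C, then cos²A + cos²B + cos²C + 2 cos A cos B cos C < 1. -/

import Mathlib

open Real InnerProductGeometry

theorem aux_cos_sq_lt_one (t : ℝ) (h : 0 < Real.sin t) : Real.cos t ^ 2 < 1 := by
  nlinarith [Real.sin_sq_add_cos_sq t, mul_pos h h]

set_option maxHeartbeats 1000000 in
theorem stmt_8 (P Q R : EuclideanSpace ℝ (Fin 3))
    (hP : ‖P‖ = 1) (hQ : ‖Q‖ = 1) (hR : ‖R‖ = 1)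
    (A B C : ℝ)
    (hA : A = InnerProductGeometry.angle
      (Q - (inner ℝ P Q : ℝ) • P) (R - (inner ℝ P R : ℝ) • P))
    (hB : B = InnerProductGeometry.angle
      (R - (inner ℝ Q R : ℝ) • Q) (P - (inner ℝ Q P : ℝ) • Q))
    (hC : C = InnerProductGeometry.angle
      (P - (inner ℝ R P : ℝ) • R) (Q - (inner ℝ R Q : ℝ) • R))
    (hAn : ∀ k : ℤ, A ≠ k * π)
    (hBn : ∀ k : ℤ, B ≠ k * π)
    (hCn : ∀ k : ℤ, C ≠ k * π) :
    Real.cos A ^ 2 + Real.cos B ^ 2 + Real.cos C ^ 2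
      + 2 * Real.cos A * Real.cos B * Real.cos C < 1 := by
  rw [show (inner ℝ Q P : ℝ) = inner ℝ P Q from real_inner_comm P Q] at hB
  rw [show (inner ℝ R P : ℝ) = inner ℝ P R from real_inner_comm P R,
      show (inner ℝ R Q : ℝ) = inner ℝ Q R from real_inner_comm Q R] at hC
  set a : ℝ := inner ℝ Q R with ha
  set b : ℝ := inner ℝ P R with hb
  set c : ℝ := inner ℝ P Q with hc
  have hPP : (inner ℝ P P : ℝ) = 1 := by rw [real_inner_self_eq_norm_sq, hP]; norm_num
  have hQQ : (inner ℝ Q Q : ℝ) = 1 := by rw [real_inner_self_eq_norm_sq, hQ]; norm_num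
  have hRR : (inner ℝ R R : ℝ) = 1 := by rw [real_inner_self_eq_norm_sq, hR]; norm_num
  have hQP : (inner ℝ Q P : ℝ) = c := real_inner_comm P Q
  have hRP : (inner ℝ R P : ℝ) = b := real_inner_comm P R
  have hRQ : (inner ℝ R Q : ℝ) = a := real_inner_comm Q R
  -- bounds on a b c
  have hca : a ^ 2 ≤ 1 := by
    have h := abs_real_inner_le_norm Q R
    rw [hQ, hR, mul_one] at h
    calc a ^ 2 = |a| ^ 2 := (sq_abs a).symm
      _ ≤ 1 := pow_le_one₀ (abs_nonneg a) h
  have hcb : b ^ 2 ≤ 1 := by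
    have h := abs_real_inner_le_norm P R
    rw [hP, hR, mul_one] at h
    calc b ^ 2 = |b| ^ 2 := (sq_abs b).symm
      _ ≤ 1 := pow_le_one₀ (abs_nonneg b) h
  have hcc : c ^ 2 ≤ 1 := by
    have h := abs_real_inner_le_norm P Q
    rw [hP, hQ, mul_one] at h
    calc c ^ 2 = |c| ^ 2 := (sq_abs c).symm
      _ ≤ 1 := pow_le_one₀ (abs_nonneg c) h
  -- side "sines"
  set x : ℝ := Real.sqrt (1 - a ^ 2) with hxdef
  set y : ℝ := Real.sqrt (1 - b ^ 2) with hydef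
  set z : ℝ := Real.sqrt (1 - c ^ 2) with hzdef
  have hx2 : x ^ 2 = 1 - a ^ 2 := Real.sq_sqrt (by linarith)
  have hy2 : y ^ 2 = 1 - b ^ 2 := Real.sq_sqrt (by linarith)
  have hz2 : z ^ 2 = 1 - c ^ 2 := Real.sq_sqrt (by linarith)
  -- norms of the projected vectors
  have nQP : ‖Q - c • P‖ = z := by
    rw [← Real.sqrt_sq (norm_nonneg (Q - c • P)),
      norm_sub_sq_real, real_inner_smul_right, norm_smul, hQ, hP, hQP, hzdef]
    congr 1
    simp [sq_abs]
    ring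
  have nRP : ‖R - b • P‖ = y := by
    rw [← Real.sqrt_sq (norm_nonneg (R - b • P)),
      norm_sub_sq_real, real_inner_smul_right, norm_smul, hR, hP, hRP, hydef]
    congr 1
    simp [sq_abs]
    ring
  have nRQ : ‖R - a • Q‖ = x := by
    rw [← Real.sqrt_sq (norm_nonneg (R - a • Q)),
      norm_sub_sq_real, real_inner_smul_right, norm_smul, hR, hQ, hRQ, hxdef]
    congr 1
    simp [sq_abs]
    ring
  have nPQ : ‖P - c • Q‖ = z := by
    rw [← Real.sqrt_sq (norm_nonneg (P - c • Q)),
      norm_sub_sq_real, real_inner_smul_right, norm_smul, hP, hQ, hzdef]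
    congr 1
    simp [sq_abs, hc]
    ring
  have nPR : ‖P - b • R‖ = y := by
    rw [← Real.sqrt_sq (norm_nonneg (P - b • R)),
      norm_sub_sq_real, real_inner_smul_right, norm_smul, hP, hR, hydef]
    congr 1
    simp [sq_abs, hb]
    ring
  have nQR : ‖Q - a • R‖ = x := by
    rw [← Real.sqrt_sq (norm_nonneg (Q - a • R)),
      norm_sub_sq_real, real_inner_smul_right, norm_smul, hQ, hR, hxdef]
    congr 1
    simp [sq_abs, ha]
    ring
  -- inner products between projected vectors
  have iA : (inner ℝ (Q - c • P) (R - b • P) : ℝ) = a - b * c := by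
    rw [inner_sub_left, inner_sub_right, inner_sub_right, real_inner_smul_left,
      real_inner_smul_left, real_inner_smul_right, real_inner_smul_right, hPP, hQP, ← ha, ← hb]
    ring
  have iB : (inner ℝ (R - a • Q) (P - c • Q) : ℝ) = b - a * c := by
    rw [inner_sub_left, inner_sub_right, inner_sub_right, real_inner_smul_left,
      real_inner_smul_left, real_inner_smul_right, real_inner_smul_right, hQQ, hRQ, hRP, hQP]
    ring
  have iC : (inner ℝ (P - b • R) (Q - a • R) : ℝ) = c - a * b := by
    rw [inner_sub_left, inner_sub_right, inner_sub_right, real_inner_smul_left,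
      real_inner_smul_left, real_inner_smul_right, real_inner_smul_right, hRR, hRQ, ← hb, ← hc]
    ring
  -- cosine formulas
  have hcosA : Real.cos A = (a - b * c) / (z * y) := by
    rw [hA, InnerProductGeometry.cos_angle, iA, nQP, nRP]
  have hcosB : Real.cos B = (b - a * c) / (x * z) := by
    rw [hB, InnerProductGeometry.cos_angle, iB, nRQ, nPQ]
  have hcosC : Real.cos C = (c - a * b) / (y * x) := by
    rw [hC, InnerProductGeometry.cos_angle, iC, nPR, nQR]
  -- sines are positive
  have hsA : 0 < Real.sin A := by
    apply Real.sin_pos_of_pos_of_lt_pi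
    · exact lt_of_le_of_ne (hA ▸ InnerProductGeometry.angle_nonneg _ _)
        (Ne.symm (by simpa using hAn 0))
    · exact lt_of_le_of_ne (hA ▸ InnerProductGeometry.angle_le_pi _ _)
        (by simpa using hAn 1)
  have hsB : 0 < Real.sin B := by
    apply Real.sin_pos_of_pos_of_lt_pi
    · exact lt_of_le_of_ne (hB ▸ InnerProductGeometry.angle_nonneg _ _)
        (Ne.symm (by simpa using hBn 0))
    · exact lt_of_le_of_ne (hB ▸ InnerProductGeometry.angle_le_pi _ _)
        (by simpa using hBn 1)
  have hsC : 0 < Real.sin C := by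
    apply Real.sin_pos_of_pos_of_lt_pi
    · exact lt_of_le_of_ne (hC ▸ InnerProductGeometry.angle_nonneg _ _)
        (Ne.symm (by simpa using hCn 0))
    · exact lt_of_le_of_ne (hC ▸ InnerProductGeometry.angle_le_pi _ _)
        (by simpa using hCn 1)
  -- degenerate cases
  by_cases hda : a ^ 2 = 1
  · have hx0 : x = 0 := by rw [hxdef, hda]; simp
    rw [hcosB, hcosC, hx0, mul_zero, zero_mul, div_zero, div_zero]
    have hlt : Real.cos A ^ 2 < 1 := aux_cos_sq_lt_one A hsA
    simpa using hlt
  by_cases hdb : b ^ 2 = 1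
  · have hy0 : y = 0 := by rw [hydef, hdb]; simp
    rw [hcosA, hcosC, hy0, mul_zero, zero_mul, div_zero, div_zero]
    have hlt : Real.cos B ^ 2 < 1 := aux_cos_sq_lt_one B hsB
    simpa using hlt
  by_cases hdc : c ^ 2 = 1
  · have hz0 : z = 0 := by rw [hzdef, hdc]; simp
    rw [hcosA, hcosB, hz0, zero_mul, mul_zero, div_zero, div_zero]
    have hlt : Real.cos C ^ 2 < 1 := aux_cos_sq_lt_one C hsC
    simpa using hlt
  -- main case
  have hxa : (0:ℝ) < 1 - a ^ 2 := lt_of_le_of_ne (by linarith) (Ne.symm (by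
    intro h; exact hda (by linarith)))
  have hxb : (0:ℝ) < 1 - b ^ 2 := lt_of_le_of_ne (by linarith) (Ne.symm (by
    intro h; exact hdb (by linarith)))
  have hxc : (0:ℝ) < 1 - c ^ 2 := lt_of_le_of_ne (by linarith) (Ne.symm (by
    intro h; exact hdc (by linarith)))
  have hxp : 0 < x := Real.sqrt_pos.mpr hxa
  have hyp : 0 < y := Real.sqrt_pos.mpr hxb
  have hzp : 0 < z := Real.sqrt_pos.mpr hxc
  have h1 : Real.cos A * (z * y) = a - b * c := by
    rw [hcosA, div_mul_cancel₀]; positivity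
  have h2 : Real.cos B * (x * z) = b - a * c := by
    rw [hcosB, div_mul_cancel₀]; positivity
  have h3 : Real.cos C * (y * x) = c - a * b := by
    rw [hcosC, div_mul_cancel₀]; positivity
  have e1 : Real.cos A ^ 2 * ((1 - b ^ 2) * (1 - c ^ 2)) = (a - b * c) ^ 2 := by
    rw [← hy2, ← hz2]
    linear_combination (Real.cos A * (z * y) + (a - b * c)) * h1
  have e2 : Real.cos B ^ 2 * ((1 - a ^ 2) * (1 - c ^ 2)) = (b - a * c) ^ 2 := by
    rw [← hx2, ← hz2]
    linear_combination (Real.cos B * (x * z) + (b - a * c)) * h2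
  have e3 : Real.cos C ^ 2 * ((1 - a ^ 2) * (1 - b ^ 2)) = (c - a * b) ^ 2 := by
    rw [← hx2, ← hy2]
    linear_combination (Real.cos C * (y * x) + (c - a * b)) * h3
  have eprod : Real.cos A * Real.cos B * Real.cos C *
      ((1 - a ^ 2) * ((1 - b ^ 2) * (1 - c ^ 2)))
      = (a - b * c) * ((b - a * c) * (c - a * b)) := by
    rw [← hx2, ← hy2, ← hz2]
    linear_combination (Real.cos B * (x * z)) * (Real.cos C * (y * x)) * h1
      + (a - b * c) * (Real.cos C * (y * x)) * h2 + (a - b * c) * (b - a * c) * h3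
  -- Gram determinant is positive
  have hg : 0 < 1 - a ^ 2 - b ^ 2 - c ^ 2 + 2 * a * b * c := by
    have hgid : 1 - a ^ 2 - b ^ 2 - c ^ 2 + 2 * a * b * c
        = (1 - b ^ 2) * (1 - c ^ 2) * Real.sin A ^ 2 := by
      have pyth := Real.sin_sq_add_cos_sq A
      linear_combination (-((1 - b ^ 2) * (1 - c ^ 2))) * pyth + e1
    rw [hgid]; positivity
  -- key identity
  have key : (1 - (Real.cos A ^ 2 + Real.cos B ^ 2 + Real.cos C ^ 2
      + 2 * Real.cos A * Real.cos B * Real.cos C))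
      * ((1 - a ^ 2) * (1 - b ^ 2) * (1 - c ^ 2))
      = (1 - a ^ 2 - b ^ 2 - c ^ 2 + 2 * a * b * c) ^ 2 := by
    linear_combination (-(1 - a ^ 2)) * e1 + (-(1 - b ^ 2)) * e2
      + (-(1 - c ^ 2)) * e3 + (-2) * eprod
  have hD : (0:ℝ) < (1 - a ^ 2) * (1 - b ^ 2) * (1 - c ^ 2) :=
    mul_pos (mul_pos hxa hxb) hxc
  have hgt : 0 < (1 - (Real.cos A ^ 2 + Real.cos B ^ 2 + Real.cos C ^ 2
      + 2 * Real.cos A * Real.cos B * Real.cos C))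
      * ((1 - a ^ 2) * (1 - b ^ 2) * (1 - c ^ 2)) := key ▸ pow_pos hg 2
  have hfin := div_pos hgt hD
  rw [mul_div_cancel_right₀ _ (ne_of_gt hD)] at hfin
  exact sub_pos.mp hfin
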